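/- Let n ≥ 3 and let D_{2n} = ⟨a, b | aⁿ = b² = e, (ab)² = e⟩ be the dihedral group of order 2n with set of reflections B = {b, ab, a²b, …, a^{n−1}b}. Then no element w ∈ B is a resolving involution of the power graph P_{D_{2n}}: there do not exist vertices x, y outside the twin class of w with R{x,y} = {x, y, w}. -/

import Mathlib

open SimpleGraph

/-- `W` is a resolving set for the graph `Γ`: any two distinct vertices are
distinguished by their distance to some element of `W`. -/
def IsResolvingSet {V : Type*} (Γ : SimpleGraph V) (W : Set V) : Prop :=
  ∀ u v : V, u ≠ v → ∃ w ∈ W, Γ.dist u w ≠ Γ.dist v w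

/-- The metric dimension of a graph: the least cardinality of a resolving set. -/
noncomputable def metricDim {V : Type*} (Γ : SimpleGraph V) : ℕ :=
  sInf {n | ∃ W : Set V, W.Finite ∧ W.ncard = n ∧ IsResolvingSet Γ W}

/-- A minimal resolving set: a resolving set no proper subset of which resolves. -/
def IsMinimalResolvingSet {V : Type*} (Γ : SimpleGraph V) (W : Set V) : Prop :=
  IsResolvingSet Γ W ∧ ∀ W' : Set V, W' ⊂ W → ¬ IsResolvingSet Γ W'

/-- Two vertices are twins if they have the same open neighborhood or the same
closed neighborhood. -/
def AreTwins {V : Type*} (Γ : SimpleGraph V) (u v : V) : Prop :=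
  Γ.neighborSet u = Γ.neighborSet v ∨
    insert u (Γ.neighborSet u) = insert v (Γ.neighborSet v)

/-- The twin class of a vertex. -/
def twinClass {V : Type*} (Γ : SimpleGraph V) (u : V) : Set V :=
  {v | AreTwins Γ u v}

/-- The number of twin classes of a graph. -/
noncomputable def twinClassCount {V : Type*} (Γ : SimpleGraph V) : ℕ :=
  {S : Set V | ∃ u : V, S = twinClass Γ u}.ncard

/-- Resolving sets of `Γ` have the exchange property. -/
def HasExchangeProperty {V : Type*} (Γ : SimpleGraph V) : Prop :=
  ∀ W₁ W₂ : Set V, IsMinimalResolvingSet Γ W₁ → IsMinimalResolvingSet Γ W₂ →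
    ∀ u ∈ W₁, ∃ v ∈ W₂, IsMinimalResolvingSet Γ ((W₁ \ {u}) ∪ {v})

/-- The (undirected) power graph of a group `G`: distinct `x`, `y` are adjacent
iff one is a positive power of the other. -/
def powerGraph (G : Type*) [Group G] : SimpleGraph G :=
  SimpleGraph.fromRel (fun x y => ∃ m : ℕ, 0 < m ∧ y = x ^ m)

/-- `R{x,y}`: the set of vertices having different distances to `x` and `y`. -/
def Rset {V : Type*} (Γ : SimpleGraph V) (x y : V) : Set V :=
  {z | Γ.dist x z ≠ Γ.dist y z}


open SimpleGraph DihedralGroup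

section aux
variable {n : ℕ}

lemma r_pow_exists (j : ZMod n) (m : ℕ) : ∃ k, (r j : DihedralGroup n) ^ m = r k := by
  induction m with
  | zero => exact ⟨0, one_def⟩
  | succ m ih => obtain ⟨k, hk⟩ := ih; exact ⟨k + j, by rw [pow_succ, hk, r_mul_r]⟩

lemma sr_pow (i : ZMod n) (m : ℕ) :
    (sr i : DihedralGroup n) ^ m = 1 ∨ (sr i : DihedralGroup n) ^ m = sr i := by
  induction m with
  | zero => left; rfl
  | succ m ih =>
    rcases ih with h | h
    · right; rw [pow_succ, h, one_mul]
    · left; rw [pow_succ, h, sr_mul_self]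

lemma pg_adj_one (hn : 3 ≤ n) {z : DihedralGroup n} (hz : z ≠ 1) :
    (powerGraph (DihedralGroup n)).Adj z 1 := by
  haveI : NeZero n := ⟨by omega⟩
  refine ⟨hz, Or.inl ⟨orderOf z, orderOf_pos z, (pow_orderOf_eq_one z).symm⟩⟩

lemma pg_adj_sr_iff (i : ZMod n) (z : DihedralGroup n) (hn : 3 ≤ n) :
    (powerGraph (DihedralGroup n)).Adj (sr i) z ↔ z = 1 := by
  constructor
  · rintro ⟨hne, ⟨m, hm, rfl⟩ | ⟨m, hm, heq⟩⟩
    · rcases sr_pow i m with h | h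
      · exact h
      · exact absurd h.symm hne
    · cases z with
      | r j =>
        obtain ⟨k, hk⟩ := r_pow_exists j m
        rw [hk] at heq; exact absurd heq (by simp)
      | sr j =>
        rcases sr_pow j m with h | h
        · rw [h, one_def] at heq; exact absurd heq (fun h => by cases h)
        · rw [h] at heq; exact absurd heq hne
  · rintro rfl
    exact (pg_adj_one hn (show (sr i : DihedralGroup n) ≠ 1 by rw [one_def]; intro h; cases h))

lemma pg_dist_one (hn : 3 ≤ n) {z : DihedralGroup n} (hz : z ≠ 1) :
    (powerGraph (DihedralGroup n)).dist 1 z = 1 :=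
  dist_eq_one_iff_adj.mpr (pg_adj_one hn hz).symm

lemma pg_dist_r_sr (hn : 3 ≤ n) {a : ZMod n} (ha : a ≠ 0) (i : ZMod n) :
    (powerGraph (DihedralGroup n)).dist (r a) (sr i) = 2 := by
  have hr1 : (r a : DihedralGroup n) ≠ 1 := by rw [one_def]; intro h; exact ha (r.inj h)
  have hsr1 : (sr i : DihedralGroup n) ≠ 1 := by rw [one_def]; intro h; cases h
  have hadj1 : (powerGraph (DihedralGroup n)).Adj (r a) 1 := pg_adj_one hn hr1
  have hadj2 : (powerGraph (DihedralGroup n)).Adj 1 (sr i) := (pg_adj_one hn hsr1).symm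
  have hle : (powerGraph (DihedralGroup n)).dist (r a) (sr i) ≤ 2 :=
    dist_le (Walk.cons hadj1 (Walk.cons hadj2 Walk.nil))
  have hne0 : (powerGraph (DihedralGroup n)).dist (r a) (sr i) ≠ 0 := by
    have hreach : (powerGraph (DihedralGroup n)).Reachable (r a) (sr i) :=
      ⟨Walk.cons hadj1 (Walk.cons hadj2 Walk.nil)⟩
    exact (hreach.pos_dist_of_ne (by simp)).ne'
  have hne1 : (powerGraph (DihedralGroup n)).dist (r a) (sr i) ≠ 1 := by
    intro h
    rw [dist_eq_one_iff_adj] at h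
    rw [adj_comm, pg_adj_sr_iff i _ hn] at h
    exact hr1 h
  omega

lemma sr_twins (i j : ZMod n) (hn : 3 ≤ n) :
    AreTwins (powerGraph (DihedralGroup n)) (sr i) (sr j) := by
  left
  ext z
  simp only [mem_neighborSet, pg_adj_sr_iff _ _ hn]

lemma key_case (hn : 3 ≤ n) (i0 a : ZMod n) (ha : a ≠ 0)
    (hR : Rset (powerGraph (DihedralGroup n)) 1 (r a) =
      {(1 : DihedralGroup n), r a, sr i0}) : False := by
  haveI : Fact (1 < n) := ⟨by omega⟩
  have h1 : (1 : ZMod n) ≠ 0 := one_ne_zero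
  have hmem : (sr (i0 + 1) : DihedralGroup n) ∈
      Rset (powerGraph (DihedralGroup n)) 1 (r a) := by
    show _ ≠ _
    rw [pg_dist_one hn (show (sr (i0 + 1) : DihedralGroup n) ≠ 1 by rw [one_def]; intro h; cases h),
        pg_dist_r_sr hn ha (i0 + 1)]
    omega
  rw [hR] at hmem
  simp only [Set.mem_insert_iff, Set.mem_singleton_iff, one_def] at hmem
  rcases hmem with h | h | h
  · cases h
  · cases h
  · have h' : i0 + 1 = i0 + 0 := by
      rw [add_zero]; exact sr.inj h
    exact h1 (add_left_cancel h')


end aux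

/-- No reflection of the dihedral group `D_{2n}` (`n ≥ 3`) is a
resolving involution of the power graph `P_{D_{2n}}`. -/
theorem reflection_not_resolving_involution (n : ℕ) (hn : 3 ≤ n)
    (w : DihedralGroup n) (hw : ∃ i : ZMod n, w = DihedralGroup.sr i) :
    ¬ ∃ x y : DihedralGroup n,
        x ∉ twinClass (powerGraph (DihedralGroup n)) w ∧
        y ∉ twinClass (powerGraph (DihedralGroup n)) w ∧
        Rset (powerGraph (DihedralGroup n)) x y = {x, y, w} := by
  obtain ⟨i0, rfl⟩ := hw
  rintro ⟨x, y, hx, hy, hR⟩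
  obtain ⟨a, rfl⟩ : ∃ a, x = r a := by
    cases x with
    | r a => exact ⟨a, rfl⟩
    | sr j => exact absurd (sr_twins i0 j hn) hx
  obtain ⟨b, rfl⟩ : ∃ b, y = r b := by
    cases y with
    | r b => exact ⟨b, rfl⟩
    | sr j => exact absurd (sr_twins i0 j hn) hy
  have hxmem : (r a : DihedralGroup n) ∈
      Rset (powerGraph (DihedralGroup n)) (r a) (r b) := by rw [hR]; simp
  have hxy : (r a : DihedralGroup n) ≠ r b := fun h => hxmem (by rw [h])
  have hwmem : (sr i0 : DihedralGroup n) ∈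
      Rset (powerGraph (DihedralGroup n)) (r a) (r b) := by
    rw [hR]; simp
  by_cases ha : a = 0
  · subst ha
    have hb : b ≠ 0 := fun h => hxy (by rw [h])
    apply key_case hn i0 b hb
    rw [one_def]
    exact hR
  · by_cases hb : b = 0
    · subst hb
      apply key_case hn i0 a ha
      have hcomm : Rset (powerGraph (DihedralGroup n)) (r a) (r 0) =
          Rset (powerGraph (DihedralGroup n)) (r 0) (r a) := by
        ext z; exact ne_comm
      rw [one_def, ← hcomm, hR, Set.insert_comm]
    · exact hwmem (by rw [pg_dist_r_sr hn ha, pg_dist_r_sr hn hb])
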